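/- Let μ be a σ-finite measure on 𝒳 and let q, q', r be probability densities with respect to μ, with associated probability measures Q = q·μ, Q' = q'·μ, R = r·μ. With ψ₁(x) = (x−1)/(x+1) extended by ψ₁(+∞) = 1 and the conventions 0/0 = 1 and a/0 = +∞ for a > 0, one has ∫ ψ₁²(√(q'(x)/q(x))) dR(x) ≤ 3√2·[h²(R,Q) + h²(R,Q')], where h² denotes squared Hellinger distance. -/

import Mathlib

open MeasureTheory ENNReal

open Classical in
/-- The ratio `q'/q` in `[0,+∞]`, with the conventions `0/0 = 1` and `a/0 = +∞` for
`a > 0` (the latter being automatic in `ℝ≥0∞`). -/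
noncomputable def densityRatio {𝒳 : Type*} (q q' : 𝒳 → ℝ≥0∞) (x : 𝒳) : ℝ≥0∞ :=
  if q x = 0 ∧ q' x = 0 then 1 else q' x / q x

/-- `ψ₁(√z)` for `z ∈ [0,+∞]`, where `ψ₁(x) = (x−1)/(x+1)` and `ψ₁(+∞) = 1`. -/
noncomputable def psi1OfSqrt (z : ℝ≥0∞) : ℝ :=
  if z = ⊤ then 1 else (Real.sqrt z.toReal - 1) / (Real.sqrt z.toReal + 1)

/-- Squared Hellinger distance `(1/2)∫(√a − √b)² dμ` between the probabilities of
densities `a` and `b` with respect to `μ`. -/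
noncomputable def hellingerSqDens {𝒳 : Type*} [MeasurableSpace 𝒳] (μ : Measure 𝒳)
    (a b : 𝒳 → ℝ≥0∞) : ℝ :=
  (1/2) * ∫ x, (Real.sqrt (a x).toReal - Real.sqrt (b x).toReal) ^ 2 ∂μ

lemma key_ineq (a b c : ℝ) (ha : 0 ≤ a) (hb : 0 ≤ b) :
    ((b - a) * c) ^ 2 ≤ (a + b) ^ 2 * ((c - a) ^ 2 + (c - b) ^ 2) := by
  nlinarith [sq_nonneg (a*(c-a)+b*(c-b)), mul_nonneg (mul_nonneg ha hb) (sq_nonneg (c-a)),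
    mul_nonneg (mul_nonneg ha hb) (sq_nonneg (c-b))]

lemma abs_psi1OfSqrt_le_one (z : ℝ≥0∞) : |psi1OfSqrt z| ≤ 1 := by
  unfold psi1OfSqrt
  split_ifs
  · simp
  · have h0 : (0:ℝ) ≤ Real.sqrt z.toReal := Real.sqrt_nonneg _
    rw [abs_div, abs_of_nonneg (by linarith : (0:ℝ) ≤ Real.sqrt z.toReal + 1),
      div_le_one (by linarith), abs_le]
    constructor <;> linarith

lemma measurable_psi1OfSqrt : Measurable psi1OfSqrt := by
  unfold psi1OfSqrt
  exact Measurable.ite (measurableSet_singleton ⊤) measurable_const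
    (((Real.continuous_sqrt.measurable.comp ENNReal.measurable_toReal).sub
      measurable_const).div
     ((Real.continuous_sqrt.measurable.comp ENNReal.measurable_toReal).add
      measurable_const))

lemma measurable_densityRatio {𝒳 : Type*} [MeasurableSpace 𝒳] {q q' : 𝒳 → ℝ≥0∞}
    (hq : Measurable q) (hq' : Measurable q') : Measurable (densityRatio q q') := by
  unfold densityRatio
  exact Measurable.ite
    ((hq (measurableSet_singleton 0)).inter (hq' (measurableSet_singleton 0)))
    measurable_const (hq'.div hq)

/-- For probability densities `q, q', r` w.r.t. a σ-finite measure `μ`, with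
`R = r·μ`, `Q = q·μ`, `Q' = q'·μ`, one has
`∫ ψ₁²(√(q'/q)) dR ≤ 3√2·[h²(R,Q) + h²(R,Q')]`. -/
theorem psi1_sq_expectation_le_hellinger_sum
    {𝒳 : Type*} [MeasurableSpace 𝒳] (μ : Measure 𝒳) [SigmaFinite μ]
    (q q' r : 𝒳 → ℝ≥0∞) (hq : Measurable q) (hq' : Measurable q') (hr : Measurable r)
    (hq1 : ∫⁻ x, q x ∂μ = 1) (hq'1 : ∫⁻ x, q' x ∂μ = 1) (hr1 : ∫⁻ x, r x ∂μ = 1) :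
    ∫ x, (psi1OfSqrt (densityRatio q q' x)) ^ 2 ∂(μ.withDensity r) ≤
      3 * Real.sqrt 2 * (hellingerSqDens μ r q + hellingerSqDens μ r q') := by
  set ψ : 𝒳 → ℝ := fun x => psi1OfSqrt (densityRatio q q' x) with hψdef
  have hψm : Measurable ψ := measurable_psi1OfSqrt.comp (measurable_densityRatio hq hq')
  set fc : 𝒳 → ℝ := fun x => Real.sqrt (r x).toReal with hfc
  set fa : 𝒳 → ℝ := fun x => Real.sqrt (q x).toReal with hfa
  set fb : 𝒳 → ℝ := fun x => Real.sqrt (q' x).toReal with hfb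
  have hfcm : Measurable fc := Real.continuous_sqrt.measurable.comp hr.ennreal_toReal
  have hfam : Measurable fa := Real.continuous_sqrt.measurable.comp hq.ennreal_toReal
  have hfbm : Measurable fb := Real.continuous_sqrt.measurable.comp hq'.ennreal_toReal
  -- a.e. finiteness
  have hrae : ∀ᵐ x ∂μ, r x ≠ ⊤ :=
    (ae_lt_top hr (by simp [hr1])).mono fun x hx => hx.ne
  have hqae : ∀ᵐ x ∂μ, q x ≠ ⊤ :=
    (ae_lt_top hq (by simp [hq1])).mono fun x hx => hx.ne
  have hq'ae : ∀ᵐ x ∂μ, q' x ≠ ⊤ :=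
    (ae_lt_top hq' (by simp [hq'1])).mono fun x hx => hx.ne
  -- integrabilities
  have hri : Integrable (fun x => (r x).toReal) μ :=
    integrable_toReal_of_lintegral_ne_top hr.aemeasurable (by simp [hr1])
  have hqi : Integrable (fun x => (q x).toReal) μ :=
    integrable_toReal_of_lintegral_ne_top hq.aemeasurable (by simp [hq1])
  have hq'i : Integrable (fun x => (q' x).toReal) μ :=
    integrable_toReal_of_lintegral_ne_top hq'.aemeasurable (by simp [hq'1])
  have hsq : ∀ x, fc x ^ 2 = (r x).toReal := fun x => Real.sq_sqrt ENNReal.toReal_nonneg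
  have hsqa : ∀ x, fa x ^ 2 = (q x).toReal := fun x => Real.sq_sqrt ENNReal.toReal_nonneg
  have hsqb : ∀ x, fb x ^ 2 = (q' x).toReal := fun x => Real.sq_sqrt ENNReal.toReal_nonneg
  have hI1 : Integrable (fun x => (fc x - fa x) ^ 2) μ := by
    refine Integrable.mono' ((hri.const_mul 2).add (hqi.const_mul 2))
      ((hfcm.sub hfam).pow_const 2).aestronglyMeasurable ?_
    filter_upwards with x
    rw [Real.norm_eq_abs, abs_of_nonneg (sq_nonneg _)]
    simp only [Pi.add_apply]
    nlinarith [sq_nonneg (fc x + fa x), hsq x, hsqa x]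
  have hI2 : Integrable (fun x => (fc x - fb x) ^ 2) μ := by
    refine Integrable.mono' ((hri.const_mul 2).add (hq'i.const_mul 2))
      ((hfcm.sub hfbm).pow_const 2).aestronglyMeasurable ?_
    filter_upwards with x
    rw [Real.norm_eq_abs, abs_of_nonneg (sq_nonneg _)]
    simp only [Pi.add_apply]
    nlinarith [sq_nonneg (fc x + fb x), hsq x, hsqb x]
  have hψle : ∀ x, ψ x ^ 2 ≤ 1 := by
    intro x
    have := abs_psi1OfSqrt_le_one (densityRatio q q' x)
    nlinarith [abs_nonneg (psi1OfSqrt (densityRatio q q' x)),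
      sq_abs (psi1OfSqrt (densityRatio q q' x))]
  have hL : Integrable (fun x => ψ x ^ 2 * (r x).toReal) μ := by
    refine Integrable.mono' hri
      ((hψm.pow_const 2).mul hr.ennreal_toReal).aestronglyMeasurable ?_
    filter_upwards with x
    rw [Real.norm_eq_abs,
      abs_of_nonneg (mul_nonneg (sq_nonneg _) ENNReal.toReal_nonneg)]
    nlinarith [ENNReal.toReal_nonneg (a := r x), hψle x, sq_nonneg (ψ x)]
  -- rewrite the LHS as an integral w.r.t. μ
  have hwd : μ.withDensity r = μ.withDensity (fun x => ((r x).toNNReal : ℝ≥0∞)) :=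
    withDensity_congr_ae (hrae.mono fun x hx => (ENNReal.coe_toNNReal hx).symm)
  have hLHS : ∫ x, ψ x ^ 2 ∂(μ.withDensity r) = ∫ x, ψ x ^ 2 * (r x).toReal ∂μ := by
    rw [hwd, integral_withDensity_eq_integral_smul hr.ennreal_toNNReal
      (fun x => ψ x ^ 2)]
    congr 1
    ext x
    simp [NNReal.smul_def, mul_comm, ENNReal.toReal]
  -- pointwise a.e. bound
  have hpt : ∀ᵐ x ∂μ, ψ x ^ 2 * (r x).toReal ≤ (fc x - fa x) ^ 2 + (fc x - fb x) ^ 2 := by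
    filter_upwards [hqae, hq'ae] with x hxq hxq'
    have ha : 0 ≤ fa x := Real.sqrt_nonneg _
    have hb : 0 ≤ fb x := Real.sqrt_nonneg _
    have hc : 0 ≤ fc x := Real.sqrt_nonneg _
    by_cases h0 : q x = 0 ∧ q' x = 0
    · have hz : ψ x = 0 := by
        simp [hψdef, densityRatio, psi1OfSqrt, h0]
      rw [hz]
      nlinarith [sq_nonneg (fc x - fa x), sq_nonneg (fc x - fb x),
        ENNReal.toReal_nonneg (a := r x)]
    · have hratio : densityRatio q q' x = q' x / q x := by
        simp [densityRatio, h0]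
      by_cases hq0 : q x = 0
      · have hq'0 : q' x ≠ 0 := fun h => h0 ⟨hq0, h⟩
        have htop : densityRatio q q' x = ⊤ := by
          rw [hratio, hq0, ENNReal.div_zero hq'0]
        have hψ1 : ψ x = 1 := by simp [hψdef, htop, psi1OfSqrt]
        have ha0 : fa x = 0 := by simp [hfa, hq0]
        rw [hψ1, ha0]
        nlinarith [sq_nonneg (fc x - fb x), hsq x]
      · have hapos : 0 < fa x :=
          Real.sqrt_pos.mpr (ENNReal.toReal_pos hq0 hxq)
        have hfin : densityRatio q q' x ≠ ⊤ := by
          rw [hratio]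
          exact (ENNReal.div_lt_top hxq' hq0).ne
        have htr : (densityRatio q q' x).toReal = (q' x).toReal / (q x).toReal := by
          rw [hratio, ENNReal.toReal_div]
        have hsd : Real.sqrt ((densityRatio q q' x).toReal) = fb x / fa x := by
          rw [htr, Real.sqrt_div ENNReal.toReal_nonneg]
        have hψx : ψ x = (fb x - fa x) / (fa x + fb x) := by
          rw [hψdef]
          simp only [psi1OfSqrt, if_neg hfin, hsd]
          have hd1 : fb x / fa x + 1 ≠ 0 := by positivity
          have hd2 : fa x + fb x ≠ 0 := by positivity
          rw [div_eq_div_iff hd1 hd2]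
          field_simp [hapos.ne']
          ring
        rw [hψx, div_pow, div_mul_eq_mul_div, div_le_iff₀ (by positivity)]
        nlinarith [key_ineq (fa x) (fb x) (fc x) ha hb, hsq x]
  have hmono : ∫ x, ψ x ^ 2 * (r x).toReal ∂μ ≤
      ∫ x, ((fc x - fa x) ^ 2 + (fc x - fb x) ^ 2) ∂μ :=
    integral_mono_ae hL (hI1.add hI2) hpt
  have hsplit : ∫ x, ((fc x - fa x) ^ 2 + (fc x - fb x) ^ 2) ∂μ =
      2 * hellingerSqDens μ r q + 2 * hellingerSqDens μ r q' := by
    rw [integral_add hI1 hI2]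
    unfold hellingerSqDens
    ring
  have hh1 : 0 ≤ hellingerSqDens μ r q := by
    unfold hellingerSqDens
    positivity
  have hh2 : 0 ≤ hellingerSqDens μ r q' := by
    unfold hellingerSqDens
    positivity
  have hs2 : (1:ℝ) ≤ Real.sqrt 2 := by
    rw [show (1:ℝ) = Real.sqrt 1 from (Real.sqrt_one).symm]
    exact Real.sqrt_le_sqrt (by norm_num)
  calc ∫ x, ψ x ^ 2 ∂(μ.withDensity r)
      = ∫ x, ψ x ^ 2 * (r x).toReal ∂μ := hLHS
    _ ≤ 2 * hellingerSqDens μ r q + 2 * hellingerSqDens μ r q' := by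
        rw [← hsplit]; exact hmono
    _ ≤ 3 * Real.sqrt 2 * (hellingerSqDens μ r q + hellingerSqDens μ r q') := by
        nlinarith
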